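/- The objective function f is continuously differentiable on (ℝ^d)^n, and for every s ∈ {1,…,n} and every configuration x = (x_1,…,x_n), the partial gradient with respect to the block x_s is ∇_s f(x) = 2 Σ_{j∈A_s} (x_s − P_{B(a_j, d̂_{sj})}(x_s)) + 2 Σ_{q∈B_s} (x_s − P_{B(x_q, l̂_{sq})}(x_s)). -/

import Mathlib

open Finset Filter InnerProductSpace

noncomputable def obj {d n : ℕ} {J : Type*} (a : J → EuclideanSpace ℝ (Fin d))
    (A : Fin n → Finset J) (dhat : Fin n → J → ℝ)
    (B : Fin n → Finset (Fin n)) (lhat : Fin n → Fin n → ℝ)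
    (x : Fin n → EuclideanSpace ℝ (Fin d)) : ℝ :=
  (∑ i, ∑ j ∈ A i, max (‖x i - a j‖ - dhat i j) 0 ^ 2)
    + (1 / 2) * ∑ i, ∑ q ∈ B i, max (‖x i - x q‖ - lhat i q) 0 ^ 2

noncomputable def projBall {d : ℕ} (a : EuclideanSpace ℝ (Fin d)) (r : ℝ)
    (z : EuclideanSpace ℝ (Fin d)) : EuclideanSpace ℝ (Fin d) :=
  if ‖z - a‖ ≤ r then z else a + (r / ‖z - a‖) • (z - a)

/-- Partial gradient of `f` with respect to the `i`-th block. -/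
noncomputable def blockGrad {d n : ℕ} (f : (Fin n → EuclideanSpace ℝ (Fin d)) → ℝ)
    (i : Fin n) (x : Fin n → EuclideanSpace ℝ (Fin d)) : EuclideanSpace ℝ (Fin d) :=
  gradient (fun y => f (Function.update x i y)) (x i)


variable {d : ℕ}

local notation "E" => EuclideanSpace ℝ (Fin d)

lemma Gfun_eq (c : E) {r : ℝ} (hr : 0 ≤ r) (z : E) :
    (2:ℝ) • (z - projBall c r z) = (2 * max (‖z - c‖ - r) 0 / ‖z - c‖) • (z - c) := by
  by_cases h : ‖z - c‖ ≤ r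
  · rw [projBall, if_pos h, max_eq_right (by linarith)]
    simp
  · rw [projBall, if_neg h]
    push_neg at h
    have hν : ‖z - c‖ ≠ 0 := (hr.trans_lt h).ne'
    rw [max_eq_left (by linarith)]
    have key : 2 * (‖z - c‖ - r) / ‖z - c‖ = 2 - 2 * (r / ‖z - c‖) := by
      field_simp
    rw [key]
    module

lemma hasFDerivAt_gfun (c : E) {r : ℝ} (hr : 0 ≤ r) (z : E) :
    HasFDerivAt (fun w : E => max (‖w - c‖ - r) 0 ^ 2)
      (toDual ℝ E ((2:ℝ) • (z - projBall c r z))) z := by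
  rcases lt_trichotomy ‖z - c‖ r with h | h | h
  · -- interior: locally zero
    have hproj : projBall c r z = z := if_pos h.le
    have hzero : (2:ℝ) • (z - projBall c r z) = 0 := by rw [hproj]; simp
    rw [hzero, map_zero]
    have hev : (fun w : E => max (‖w - c‖ - r) 0 ^ 2) =ᶠ[nhds z] fun _ => (0:ℝ) := by
      have hc : ContinuousAt (fun w : E => ‖w - c‖) z := by fun_prop
      filter_upwards [hc.eventually_lt continuousAt_const h] with w hw
      rw [max_eq_right (by linarith)]
      norm_num
    exact (hasFDerivAt_const (0:ℝ) z).congr_of_eventuallyEq hev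
  · -- boundary
    have hproj : projBall c r z = z := if_pos h.le
    have hzero : (2:ℝ) • (z - projBall c r z) = 0 := by rw [hproj]; simp
    rw [hzero, map_zero]
    rw [hasFDerivAt_iff_isLittleO_nhds_zero]
    rw [Asymptotics.isLittleO_iff]
    intro ε hε
    filter_upwards [Metric.ball_mem_nhds (0:E) hε] with w hw
    rw [mem_ball_zero_iff] at hw
    have h1 : max (‖z + w - c‖ - r) 0 ≤ ‖w‖ := by
      apply max_le _ (norm_nonneg w)
      have := norm_sub_norm_le (z + w - c) (z - c)
      rw [h] at this
      calc ‖z + w - c‖ - r ≤ ‖z + w - c - (z - c)‖ := this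
        _ = ‖w‖ := by congr 1; abel
    have h0 : (0:ℝ) ≤ max (‖z + w - c‖ - r) 0 := le_max_right _ _
    have hz : max (‖z - c‖ - r) 0 = 0 := by rw [h]; simp
    simp only [hz, ContinuousLinearMap.zero_apply]
    have hb : max (‖z + w - c‖ - r) 0 ^ 2 ≤ ‖w‖ * ‖w‖ := by
      rw [← sq]
      exact pow_le_pow_left₀ h0 h1 2
    calc |max (‖z + w - c‖ - r) 0 ^ 2 - 0 ^ 2 - 0| = max (‖z + w - c‖ - r) 0 ^ 2 := by
          norm_num [abs_of_nonneg (pow_nonneg h0 2)]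
      _ ≤ ‖w‖ * ‖w‖ := hb
      _ ≤ ε * ‖w‖ := mul_le_mul_of_nonneg_right hw.le (norm_nonneg w)
  · -- exterior
    have hν : (0:ℝ) < ‖z - c‖ := hr.trans_lt h
    set t₀ : ℝ := ‖z - c‖ ^ 2 with ht₀
    have ht₀pos : (0:ℝ) < t₀ := by positivity
    have hsq : Real.sqrt t₀ = ‖z - c‖ := Real.sqrt_sq (norm_nonneg _)
    have hu : HasFDerivAt (fun w : E => ‖w - c‖ ^ 2)
        ((2:ℕ) • ((innerSL ℝ (z - c)).comp (ContinuousLinearMap.id ℝ _))) z :=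
      ((hasFDerivAt_id z).sub_const c).norm_sq
    have hh : HasDerivAt (fun t : ℝ => (Real.sqrt t - r) ^ 2)
        ((2:ℕ) * (Real.sqrt t₀ - r) ^ 1 * (1 / (2 * Real.sqrt t₀))) t₀ :=
      ((Real.hasDerivAt_sqrt ht₀pos.ne').sub_const r).pow 2
    have hcomp := hh.comp_hasFDerivAt z hu
    have hev : (fun w : E => max (‖w - c‖ - r) 0 ^ 2)
        =ᶠ[nhds z] (fun t : ℝ => (Real.sqrt t - r) ^ 2) ∘ (fun w : E => ‖w - c‖ ^ 2) := by
      have hc : ContinuousAt (fun w : E => ‖w - c‖) z := by fun_prop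
      filter_upwards [continuousAt_const.eventually_lt hc h] with w hw
      simp only [Function.comp_apply, Real.sqrt_sq (norm_nonneg _)]
      rw [max_eq_left (by linarith)]
    have hmain := hcomp.congr_of_eventuallyEq hev
    refine hmain.congr_fderiv ?_
    rw [Gfun_eq c hr z, max_eq_left (by linarith)]
    apply ContinuousLinearMap.ext
    intro w
    simp only [toDual_apply_apply, ContinuousLinearMap.smul_apply, ContinuousLinearMap.coe_comp',
      Function.comp_apply, ContinuousLinearMap.coe_id', id_eq, innerSL_apply_apply, nsmul_eq_mul,
      real_inner_smul_left, smul_eq_mul, hsq]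
    field_simp
    ring

lemma continuous_Gfun (c : E) {r : ℝ} (hr : 0 ≤ r) :
    Continuous fun z : E => (2:ℝ) • (z - projBall c r z) := by
  rcases hr.lt_or_eq with hr' | hr'
  · -- 0 < r
    rw [continuous_iff_continuousAt]
    intro z
    by_cases h : ‖z - c‖ < r
    · have hev : (fun w : E => (2:ℝ) • (w - projBall c r w)) =ᶠ[nhds z] fun _ => (0:E) := by
        have hc : ContinuousAt (fun w : E => ‖w - c‖) z := by fun_prop
        filter_upwards [hc.eventually_lt continuousAt_const h] with w hw
        rw [projBall, if_pos hw.le]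
        simp
      exact continuousAt_const.congr hev.symm
    · push_neg at h
      have hν : ‖z - c‖ ≠ 0 := by
        intro h0; rw [h0] at h; linarith
      have hfun : (fun w : E => (2:ℝ) • (w - projBall c r w))
          = fun w : E => (2 * max (‖w - c‖ - r) 0 / ‖w - c‖) • (w - c) :=
        funext (Gfun_eq c hr)
      rw [hfun]
      apply ContinuousAt.fun_smul
      · exact ContinuousAt.div (by fun_prop) (by fun_prop) hν
      · fun_prop
  · -- r = 0
    subst hr'
    have hfun : (fun w : E => (2:ℝ) • (w - projBall c 0 w)) = fun w : E => (2:ℝ) • (w - c) := by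
      funext w
      by_cases hw : w = c
      · subst hw
        rw [projBall, if_pos (by simp)]
      · have hν : ‖w - c‖ ≠ 0 := by
          simpa [sub_eq_zero] using hw
        rw [Gfun_eq c le_rfl w, max_eq_left (by simp [norm_nonneg]), sub_zero]
        rw [mul_div_assoc, div_self hν, mul_one]
    rw [hfun]
    fun_prop

lemma contDiff_gfun (c : E) {r : ℝ} (hr : 0 ≤ r) :
    ContDiff ℝ 1 fun w : E => max (‖w - c‖ - r) 0 ^ 2 := by
  rw [contDiff_one_iff_fderiv]
  refine ⟨fun z => (hasFDerivAt_gfun c hr z).differentiableAt, ?_⟩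
  have hfd : (fderiv ℝ fun w : E => max (‖w - c‖ - r) 0 ^ 2)
      = fun z => toDual ℝ E ((2:ℝ) • (z - projBall c r z)) :=
    funext fun z => (hasFDerivAt_gfun c hr z).fderiv
  rw [hfd]
  exact (toDual ℝ E).continuous.comp (continuous_Gfun c hr)

theorem stmt1 (d n : ℕ) (hd : 1 ≤ d) (hn : 1 ≤ n) {J : Type*} [Fintype J]
    (a : J → EuclideanSpace ℝ (Fin d))
    (A : Fin n → Finset J) (dhat : Fin n → J → ℝ)
    (B : Fin n → Finset (Fin n)) (lhat : Fin n → Fin n → ℝ)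
    (hdhat : ∀ i, ∀ j ∈ A i, 0 ≤ dhat i j)
    (hlhat : ∀ i, ∀ q ∈ B i, 0 ≤ lhat i q)
    (hBirr : ∀ i : Fin n, i ∉ B i)
    (hBsymm : ∀ i q : Fin n, q ∈ B i ↔ i ∈ B q)
    (hlsymm : ∀ i q : Fin n, lhat i q = lhat q i) :
    ContDiff ℝ 1 (obj a A dhat B lhat) ∧
    ∀ (s : Fin n) (x : Fin n → EuclideanSpace ℝ (Fin d)),
      blockGrad (obj a A dhat B lhat) s x
        = (2 : ℝ) • (∑ j ∈ A s, (x s - projBall (a j) (dhat s j) (x s)))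
          + (2 : ℝ) • (∑ q ∈ B s, (x s - projBall (x q) (lhat s q) (x s))) := by
  classical
  constructor
  · -- continuous differentiability
    unfold obj
    apply ContDiff.add
    · apply ContDiff.sum
      intro i _
      apply ContDiff.sum
      intro j hj
      exact (contDiff_gfun (a j) (hdhat i j hj)).comp
        (ContinuousLinearMap.proj (R := ℝ) (φ := fun _ : Fin n => EuclideanSpace ℝ (Fin d)) i).contDiff
    · apply ContDiff.mul contDiff_const
      apply ContDiff.sum
      intro i _
      apply ContDiff.sum
      intro q hq
      have h := (contDiff_gfun (0 : EuclideanSpace ℝ (Fin d)) (hlhat i q hq)).comp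
        ((ContinuousLinearMap.proj (R := ℝ) (φ := fun _ : Fin n => EuclideanSpace ℝ (Fin d)) i)
          - ContinuousLinearMap.proj q).contDiff
      simpa [Function.comp_def, Pi.sub_apply] using h
  · intro s x
    have hqs : ∀ q ∈ B s, q ≠ s := fun q hq hq' => hBirr s (hq' ▸ hq)
    have hus : Function.update x s (x s) s = x s := Function.update_self s (x s) x
    have hF : (fun y => obj a A dhat B lhat (Function.update x s y))
        = fun y => ((∑ i ∈ univ.erase s, ∑ j ∈ A i, max (‖x i - a j‖ - dhat i j) 0 ^ 2)
            + (1 / 2) * ∑ i ∈ univ.erase s, ∑ q ∈ (B i).erase s,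
                max (‖x i - x q‖ - lhat i q) 0 ^ 2)
          + ((∑ j ∈ A s, max (‖y - a j‖ - dhat s j) 0 ^ 2)
            + ∑ q ∈ B s, max (‖y - x q‖ - lhat s q) 0 ^ 2) := by
      funext y
      simp only [obj]
      have hus' : Function.update x s y s = y := Function.update_self s y x
      have hun : ∀ i : Fin n, i ≠ s → Function.update x s y i = x i :=
        fun i hi => Function.update_of_ne hi y x
      have h1 : ∑ i, ∑ j ∈ A i, max (‖Function.update x s y i - a j‖ - dhat i j) 0 ^ 2
          = (∑ j ∈ A s, max (‖y - a j‖ - dhat s j) 0 ^ 2)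
            + ∑ i ∈ univ.erase s, ∑ j ∈ A i, max (‖x i - a j‖ - dhat i j) 0 ^ 2 := by
        rw [← Finset.add_sum_erase _ _ (mem_univ s), hus']
        congr 1
        exact Finset.sum_congr rfl fun i hi => by rw [hun i (Finset.ne_of_mem_erase hi)]
      have h2 : ∑ i, ∑ q ∈ B i,
            max (‖Function.update x s y i - Function.update x s y q‖ - lhat i q) 0 ^ 2
          = 2 * (∑ q ∈ B s, max (‖y - x q‖ - lhat s q) 0 ^ 2)
            + ∑ i ∈ univ.erase s, ∑ q ∈ (B i).erase s,
                max (‖x i - x q‖ - lhat i q) 0 ^ 2 := by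
        rw [← Finset.add_sum_erase _ _ (mem_univ s)]
        have hrow_s : ∑ q ∈ B s,
            max (‖Function.update x s y s - Function.update x s y q‖ - lhat s q) 0 ^ 2
            = ∑ q ∈ B s, max (‖y - x q‖ - lhat s q) 0 ^ 2 :=
          Finset.sum_congr rfl fun q hq => by rw [hus', hun q (hqs q hq)]
        have hrow : ∀ i ∈ univ.erase s, ∑ q ∈ B i,
            max (‖Function.update x s y i - Function.update x s y q‖ - lhat i q) 0 ^ 2
            = (if s ∈ B i then max (‖y - x i‖ - lhat s i) 0 ^ 2 else 0)
              + ∑ q ∈ (B i).erase s, max (‖x i - x q‖ - lhat i q) 0 ^ 2 := by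
          intro i hi
          have his : i ≠ s := Finset.ne_of_mem_erase hi
          have hconst : ∀ q ∈ (B i).erase s,
              max (‖Function.update x s y i - Function.update x s y q‖ - lhat i q) 0 ^ 2
              = max (‖x i - x q‖ - lhat i q) 0 ^ 2 := fun q hq => by
            rw [hun i his, hun q (Finset.ne_of_mem_erase hq)]
          by_cases hsB : s ∈ B i
          · rw [← Finset.add_sum_erase _ _ hsB, if_pos hsB]
            congr 1
            · rw [hun i his, hus', norm_sub_rev, hlsymm i s]
            · exact Finset.sum_congr rfl hconst
          · rw [if_neg hsB, zero_add]
            exact Finset.sum_congr (Finset.erase_eq_of_notMem hsB).symm hconst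
        rw [hrow_s, Finset.sum_congr rfl hrow, Finset.sum_add_distrib]
        have hifs : ∑ i ∈ univ.erase s,
            (if s ∈ B i then max (‖y - x i‖ - lhat s i) 0 ^ 2 else 0)
            = ∑ q ∈ B s, max (‖y - x q‖ - lhat s q) 0 ^ 2 := by
          rw [Finset.sum_erase _ (by simp [hBirr s]), ← Finset.sum_filter]
          have hfil : univ.filter (fun i => s ∈ B i) = B s := by
            ext i
            simp [Finset.mem_filter, hBsymm i s]
          rw [hfil]
        rw [hifs]
        ring
      rw [h1, h2]
      ring
    have hgrad : HasGradientAt (fun y => obj a A dhat B lhat (Function.update x s y))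
        ((∑ j ∈ A s, (2:ℝ) • (x s - projBall (a j) (dhat s j) (x s)))
          + ∑ q ∈ B s, (2:ℝ) • (x s - projBall (x q) (lhat s q) (x s))) (x s) := by
      rw [hF, hasGradientAt_iff_hasFDerivAt, map_add, map_sum, map_sum]
      have h1 : HasFDerivAt (fun y : EuclideanSpace ℝ (Fin d) => ∑ j ∈ A s, max (‖y - a j‖ - dhat s j) 0 ^ 2)
          (∑ j ∈ A s, toDual ℝ (EuclideanSpace ℝ (Fin d)) ((2:ℝ) • (x s - projBall (a j) (dhat s j) (x s)))) (x s) :=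
        HasFDerivAt.fun_sum fun j hj => hasFDerivAt_gfun (a j) (hdhat s j hj) (x s)
      have h2 : HasFDerivAt (fun y : EuclideanSpace ℝ (Fin d) => ∑ q ∈ B s, max (‖y - x q‖ - lhat s q) 0 ^ 2)
          (∑ q ∈ B s, toDual ℝ (EuclideanSpace ℝ (Fin d)) ((2:ℝ) • (x s - projBall (x q) (lhat s q) (x s)))) (x s) :=
        HasFDerivAt.fun_sum fun q hq => hasFDerivAt_gfun (x q) (hlhat s q hq) (x s)
      exact (h1.add h2).const_add _
    unfold blockGrad
    rw [hgrad.gradient, Finset.smul_sum, Finset.smul_sum]
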